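/- Let S be a finite regular semigroup and let J_1, J_2, ..., J_m be the J-classes of S. Then l(S) = l(J_1*) + l(J_2*) + ... + l(J_m*) − 1, where J* denotes the principal factor of a J-class J. -/

import Mathlib

/-- The length of a semigroup `M` (stated for any multiplicative structure): the largest
number of non-empty subsemigroups of `M` in a chain, minus 1; equivalently the largest
`k` for which there is a strictly increasing chain of `k + 1` non-empty subsemigroups. -/
noncomputable def semigroupLength (M : Type*) [Mul M] : ℕ :=
  sSup {k : ℕ | ∃ c : Fin (k + 1) → Subsemigroup M,
    StrictMono c ∧ ∀ i, ((c i : Set M)).Nonempty}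

/-- The principal two-sided ideal `S¹ x S¹ = {x} ∪ Sx ∪ xS ∪ SxS` generated by `x`. -/
def principalIdeal {S : Type*} [Semigroup S] (x : S) : Set S :=
  {x} ∪ {y | ∃ a, y = a * x} ∪ {y | ∃ a, y = x * a} ∪ {y | ∃ a b, y = a * x * b}

/-- The `J`-class of `x`: all elements generating the same principal two-sided ideal. -/
def jClass {S : Type*} [Semigroup S] (x : S) : Set S :=
  {y | principalIdeal y = principalIdeal x}

/-- The principal factor `J* = J ∪ {0}` of a subset `J` of a semigroup, with the zero
represented by `none`. -/
def PrincipalFactor {S : Type*} [Semigroup S] (J : Set S) : Type _ :=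
  Option {x : S // x ∈ J}

/-- Multiplication in the principal factor: the product of `x, y ∈ J` is its value in
`S` if that value lies in `J`, and `0` otherwise; `0` is absorbing. -/
noncomputable instance {S : Type*} [Semigroup S] (J : Set S) : Mul (PrincipalFactor J) :=
  ⟨fun a b =>
    match a, b with
    | some x, some y =>
        letI := Classical.dec ((x.1 * y.1) ∈ J)
        if h : (x.1 * y.1) ∈ J then (some ⟨x.1 * y.1, h⟩ : PrincipalFactor J)
        else (none : PrincipalFactor J)
    | _, _ => (none : PrincipalFactor J)⟩

section Basics
variable {S : Type*} [Semigroup S]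

lemma mem_pi_iff {x z : S} : z ∈ principalIdeal x ↔
    z = x ∨ (∃ a, z = a * x) ∨ (∃ a, z = x * a) ∨ (∃ a b, z = a * x * b) := by
  simp [principalIdeal, or_assoc]

lemma mem_pi_self (x : S) : x ∈ principalIdeal x := mem_pi_iff.2 (Or.inl rfl)

lemma mul_mem_pi_left (a x : S) : a * x ∈ principalIdeal x :=
  mem_pi_iff.2 (Or.inr (Or.inl ⟨a, rfl⟩))

lemma mul_mem_pi_right (x b : S) : x * b ∈ principalIdeal x :=
  mem_pi_iff.2 (Or.inr (Or.inr (Or.inl ⟨b, rfl⟩)))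

lemma pi_mul_mem_left {x w : S} (h : w ∈ principalIdeal x) (c : S) :
    c * w ∈ principalIdeal x := by
  rcases mem_pi_iff.1 h with rfl | ⟨a, rfl⟩ | ⟨a, rfl⟩ | ⟨a, b, rfl⟩ <;> apply mem_pi_iff.2
  · exact Or.inr (Or.inl ⟨c, rfl⟩)
  · exact Or.inr (Or.inl ⟨c * a, by rw [mul_assoc]⟩)
  · exact Or.inr (Or.inr (Or.inr ⟨c, a, by rw [mul_assoc]⟩))
  · exact Or.inr (Or.inr (Or.inr ⟨c * a, b, by simp [mul_assoc]⟩))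

lemma pi_mul_mem_right {x w : S} (h : w ∈ principalIdeal x) (c : S) :
    w * c ∈ principalIdeal x := by
  rcases mem_pi_iff.1 h with rfl | ⟨a, rfl⟩ | ⟨a, rfl⟩ | ⟨a, b, rfl⟩ <;> apply mem_pi_iff.2
  · exact Or.inr (Or.inr (Or.inl ⟨c, rfl⟩))
  · exact Or.inr (Or.inr (Or.inr ⟨a, c, rfl⟩))
  · exact Or.inr (Or.inr (Or.inl ⟨a * c, by rw [mul_assoc]⟩))
  · exact Or.inr (Or.inr (Or.inr ⟨a, b * c, by simp [mul_assoc]⟩))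

lemma pi_subset_of_mem {x z : S} (h : z ∈ principalIdeal x) :
    principalIdeal z ⊆ principalIdeal x := by
  intro w hw
  rcases mem_pi_iff.1 hw with rfl | ⟨a, rfl⟩ | ⟨a, rfl⟩ | ⟨a, b, rfl⟩
  · exact h
  · exact pi_mul_mem_left h a
  · exact pi_mul_mem_right h a
  · exact pi_mul_mem_right (pi_mul_mem_left h a) b

lemma pi_mul_left (x y : S) : principalIdeal (x * y) ⊆ principalIdeal y :=
  pi_subset_of_mem (mul_mem_pi_left x y)

lemma pi_mul_right (x y : S) : principalIdeal (x * y) ⊆ principalIdeal x :=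
  pi_subset_of_mem (mul_mem_pi_right x y)

lemma mem_jClass_iff {x y : S} : y ∈ jClass x ↔ principalIdeal y = principalIdeal x :=
  Iff.rfl

lemma mem_jClass_self (x : S) : x ∈ jClass x := rfl

lemma jClass_eq_of_pi_eq {x y : S} (h : principalIdeal x = principalIdeal y) :
    jClass x = jClass y := by
  ext w; simp [mem_jClass_iff, h]

lemma jClass_eq_of_mem {x y : S} (h : y ∈ jClass x) : jClass y = jClass x :=
  jClass_eq_of_pi_eq (mem_jClass_iff.1 h)

end Basics

section PF
variable {S : Type*} [Semigroup S] {J : Set S}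

/-- The zero of a principal factor. -/
def pfNone (J : Set S) : PrincipalFactor J := none

/-- The non-zero elements of a principal factor. -/
def pfSome (x : {s : S // s ∈ J}) : PrincipalFactor J := some x

lemma pf_cases (a : PrincipalFactor J) : a = pfNone J ∨ ∃ x, a = pfSome x := by
  cases a with
  | none => exact Or.inl rfl
  | some x => exact Or.inr ⟨x, rfl⟩

lemma pfSome_inj {x y : {s : S // s ∈ J}} (h : pfSome x = pfSome y) : x = y :=
  Option.some_injective _ h

lemma pfSome_ne_none (x : {s : S // s ∈ J}) : pfSome x ≠ pfNone J :=
  fun h => Option.some_ne_none x h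

lemma pf_none_mul (a : PrincipalFactor J) : pfNone J * a = pfNone J := by
  cases a <;> rfl

lemma pf_mul_none (a : PrincipalFactor J) : a * pfNone J = pfNone J := by
  cases a <;> rfl

lemma pf_some_mul_some (x y : {s : S // s ∈ J}) :
    pfSome x * pfSome y =
      (letI := Classical.dec ((x.1 * y.1) ∈ J)
        if h : (x.1 * y.1) ∈ J then pfSome ⟨x.1 * y.1, h⟩ else pfNone J) := rfl

lemma pf_some_mul_some_of_mem {x y : {s : S // s ∈ J}} (h : (x.1 * y.1) ∈ J) :
    pfSome x * pfSome y = pfSome ⟨x.1 * y.1, h⟩ := by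
  rw [pf_some_mul_some]; exact dif_pos h

lemma pf_some_mul_some_of_not_mem {x y : {s : S // s ∈ J}} (h : (x.1 * y.1) ∉ J) :
    pfSome x * pfSome y = pfNone J := by
  rw [pf_some_mul_some]; exact dif_neg h

/-- The zero subsemigroup `{0}` of a principal factor. -/
def Zsg (J : Set S) : Subsemigroup (PrincipalFactor J) where
  carrier := {pfNone J}
  mul_mem' := by
    rintro a b (rfl : a = pfNone J) (rfl : b = pfNone J)
    rw [pf_none_mul]; rfl

lemma mem_Zsg_iff (a : PrincipalFactor J) : a ∈ Zsg J ↔ a = pfNone J := Iff.rfl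

/-- Adjoining the zero to a subsemigroup of a principal factor. -/
def Zins (V : Subsemigroup (PrincipalFactor J)) : Subsemigroup (PrincipalFactor J) where
  carrier := insert (pfNone J) V.carrier
  mul_mem' := by
    have main : ∀ a b : PrincipalFactor J, a ∈ V.carrier → b ∈ V.carrier →
        a * b ∈ insert (pfNone J) V.carrier := by
      intro a b ha hb
      exact Or.inr (V.mul_mem ha hb)
    rintro a b (rfl | ha) hb
    · rw [pf_none_mul]; exact Or.inl rfl
    · rcases hb with rfl | hb
      · rw [pf_mul_none]; exact Or.inl rfl
      · exact main a b ha hb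

lemma mem_Zins_iff {V : Subsemigroup (PrincipalFactor J)} (a : PrincipalFactor J) :
    a ∈ Zins V ↔ a = pfNone J ∨ a ∈ V := Iff.rfl

lemma Zsg_le_Zins (V : Subsemigroup (PrincipalFactor J)) : Zsg J ≤ Zins V := by
  rintro a (rfl : a = pfNone J); exact Or.inl rfl

lemma Zins_mono {V W : Subsemigroup (PrincipalFactor J)} (h : V ≤ W) : Zins V ≤ Zins W := by
  rintro a (rfl | ha)
  · exact Or.inl rfl
  · exact Or.inr (h ha)

lemma Zins_le_of_none_mem {V W : Subsemigroup (PrincipalFactor J)} (h : V ≤ W)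
    (hn : pfNone J ∈ W) : Zins V ≤ W := by
  rintro a (rfl | ha)
  · exact hn
  · exact h ha

lemma Zsg_le_iff {V : Subsemigroup (PrincipalFactor J)} : Zsg J ≤ V ↔ pfNone J ∈ V := by
  constructor
  · intro h; exact h rfl
  · intro h a ha; rw [mem_Zsg_iff] at ha; subst ha; exact h

/-- The trace of a subsemigroup of `S` on the principal factor of `J`. -/
def traceSg (J : Set S) (T : Subsemigroup S) : Subsemigroup (PrincipalFactor J) where
  carrier := {a | ∀ x, a = pfSome x → x.1 ∈ T}
  mul_mem' := by
    intro a b ha hb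
    rcases pf_cases a with rfl | ⟨x, rfl⟩
    · rw [pf_none_mul]; rintro x hx; exact absurd hx.symm (pfSome_ne_none x)
    · rcases pf_cases b with rfl | ⟨y, rfl⟩
      · rw [pf_mul_none]; rintro x hx; exact absurd hx.symm (pfSome_ne_none x)
      · by_cases h : (x.1 * y.1) ∈ J
        · rw [pf_some_mul_some_of_mem h]
          rintro z hz
          rw [← pfSome_inj hz]
          exact T.mul_mem (ha x rfl) (hb y rfl)
        · rw [pf_some_mul_some_of_not_mem h]
          rintro x hx; exact absurd hx.symm (pfSome_ne_none x)

lemma none_mem_traceSg (T : Subsemigroup S) : pfNone J ∈ traceSg J T := by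
  rintro x hx; exact absurd hx.symm (pfSome_ne_none x)

lemma some_mem_traceSg_iff {T : Subsemigroup S} (x : {s : S // s ∈ J}) :
    pfSome x ∈ traceSg J T ↔ x.1 ∈ T := by
  constructor
  · intro h; exact h x rfl
  · rintro h y hy; rw [← pfSome_inj hy]; exact h

lemma traceSg_mono (J : Set S) {T T' : Subsemigroup S} (h : T ≤ T') :
    traceSg J T ≤ traceSg J T' := by
  intro a ha
  rcases pf_cases a with rfl | ⟨x, rfl⟩
  · exact none_mem_traceSg T'
  · rw [some_mem_traceSg_iff] at ha ⊢; exact h ha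

end PF

section Length
variable {M : Type*} [Mul M]

/-- The set of chain lengths. -/
def lengthSet (M : Type*) [Mul M] : Set ℕ :=
  {k : ℕ | ∃ c : Fin (k + 1) → Subsemigroup M,
    StrictMono c ∧ ∀ i, ((c i : Set M)).Nonempty}

lemma semigroupLength_def (M : Type*) [Mul M] : semigroupLength M = sSup (lengthSet M) := rfl

instance finite_subsemigroup [Finite M] : Finite (Subsemigroup M) :=
  Finite.of_injective (fun T => (T : Set M)) (SetLike.coe_injective)

lemma lengthSet_bddAbove [Finite M] : BddAbove (lengthSet M) := by
  refine ⟨Nat.card (Subsemigroup M), ?_⟩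
  rintro k ⟨c, hc, -⟩
  have h2 : k + 1 ≤ Nat.card (Subsemigroup M) := by
    simpa using Nat.card_le_card_of_injective c hc.injective
  omega

lemma le_semigroupLength [Finite M] {k : ℕ} (h : k ∈ lengthSet M) : k ≤ semigroupLength M :=
  le_csSup lengthSet_bddAbove h

lemma semigroupLength_mem [Finite M] (h : (lengthSet M).Nonempty) :
    semigroupLength M ∈ lengthSet M :=
  Nat.sSup_mem h lengthSet_bddAbove

lemma not_lengthSet_succ [Finite M] (k : ℕ) (h : semigroupLength M < k) : k ∉ lengthSet M :=
  fun hk => absurd (le_semigroupLength hk) (not_le.2 h)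

end Length

section ChainTools
variable {X : Type*} [PartialOrder X]

lemma strictMono_cons {n : ℕ} (a : X) (f : Fin n → X) (hf : StrictMono f)
    (ha : ∀ i, a < f i) : StrictMono (Fin.cons a f : Fin (n + 1) → X) := by
  intro i j hij
  rcases Fin.eq_zero_or_eq_succ j with rfl | ⟨j', rfl⟩
  · exact absurd hij (by simp only [Fin.lt_def, Fin.val_zero]; omega)
  · rcases Fin.eq_zero_or_eq_succ i with rfl | ⟨i', rfl⟩
    · simpa using ha j'
    · simp only [Fin.cons_succ]
      exact hf (by exact_mod_cast (Fin.succ_lt_succ_iff.1 hij))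

/-- Any nonempty finite chain can be enumerated strictly monotonically. -/
lemma chain_enum : ∀ (F : Finset X), IsChain (· ≤ ·) (F : Set X) → F.Nonempty →
    ∃ f : Fin F.card → X, StrictMono f ∧ ∀ i, f i ∈ F := by
  classical
  intro F
  induction F using Finset.strongInduction with
  | _ F ih =>
    intro hc hne
    obtain ⟨a, haF, hmin⟩ := F.exists_minimal hne
    rcases Finset.eq_empty_or_nonempty (F.erase a) with he | hne'
    · have h1 : F.card - 1 = 0 := by
        rw [← Finset.card_erase_of_mem haF, he, Finset.card_empty]
      have h2 := Finset.card_pos.2 hne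
      have hcard : F.card = 1 := by omega
      rw [hcard]
      exact ⟨fun _ => a, Subsingleton.strictMono _, fun _ => haF⟩
    · obtain ⟨f', hf', hf'mem⟩ := ih (F.erase a) (Finset.erase_ssubset haF)
        (hc.mono (by simp [Finset.coe_subset, Finset.erase_subset])) hne'
      have hlt : ∀ i, a < f' i := by
        intro i
        have hm := hf'mem i
        have hne : f' i ≠ a := Finset.ne_of_mem_erase hm
        have hmem : f' i ∈ F := Finset.mem_of_mem_erase hm
        rcases hc.total (Finset.mem_coe.2 haF) (Finset.mem_coe.2 hmem) with h | h
        · exact lt_of_le_of_ne h (Ne.symm hne)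
        · exact absurd (le_antisymm h (hmin hmem h)) hne
      have hcard' : (F.erase a).card = F.card - 1 := Finset.card_erase_of_mem haF
      have hEq : F.card = (F.erase a).card + 1 := by
        have := Finset.card_pos.2 hne
        omega
      refine ⟨fun i => (Fin.cons a f' : Fin _ → X) (Fin.cast hEq i), ?_, ?_⟩
      · intro i j hij
        exact strictMono_cons a f' hf' hlt hij
      · intro i
        dsimp only
        rcases Fin.eq_zero_or_eq_succ (Fin.cast hEq i) with hz | ⟨i', hz⟩ <;> rw [hz]
        · simpa using haF
        · simpa using Finset.mem_of_mem_erase (hf'mem i')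

/-- Gluing two chains sharing an endpoint. -/
lemma chain_glue {n m : ℕ} (c : Fin (n + 1) → X) (d : Fin (m + 1) → X)
    (hc : StrictMono c) (hd : StrictMono d) (h : c (Fin.last n) = d 0) :
    ∃ e : Fin (n + m + 1) → X, StrictMono e ∧ e 0 = c 0 ∧
      e (Fin.last (n + m)) = d (Fin.last m) := by
  refine ⟨fun i => if hi : (i : ℕ) ≤ n then c ⟨i, by omega⟩ else d ⟨(i : ℕ) - n, by omega⟩,
    ?_, ?_, ?_⟩
  · intro i j hij
    have hij' : (i : ℕ) < (j : ℕ) := hij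
    by_cases hi : (i : ℕ) ≤ n
    · by_cases hj : (j : ℕ) ≤ n
      · simp only [dif_pos hi, dif_pos hj]
        exact hc (by simp only [Fin.lt_def]; omega)
      · simp only [dif_pos hi, dif_neg hj]
        calc c ⟨i, by omega⟩ ≤ c (Fin.last n) :=
              hc.monotone (by simp only [Fin.le_def, Fin.last]; omega)
          _ = d 0 := h
          _ < d ⟨(j : ℕ) - n, by omega⟩ := hd (by simp only [Fin.lt_def, Fin.val_zero]; omega)
    · have hj : ¬ (j : ℕ) ≤ n := by omega
      simp only [dif_neg hi, dif_neg hj]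
      exact hd (by simp only [Fin.lt_def]; omega)
  · simp
  · dsimp only
    by_cases hm : m = 0
    · subst hm
      rw [dif_pos (by simp only [Fin.last]; omega)]
      have e1 : (⟨(↑(Fin.last (n + 0)) : ℕ), by omega⟩ : Fin (n + 1)) = Fin.last n := by
        apply Fin.ext; simp [Fin.last]
      rw [e1, h]
      rfl
    · rw [dif_neg (by simp only [Fin.last]; omega)]
      congr 1
      apply Fin.ext; simp only [Fin.last]; omega

end ChainTools

section Upper
variable {S : Type*} [Semigroup S] [Fintype S]

instance pf_finite (J : Set S) : Finite (PrincipalFactor J) := by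
  have h1 : Finite {x : S // x ∈ J} := Subtype.finite
  have h2 : Finite (Option {x : S // x ∈ J}) :=
    Finite.of_equiv ({x : S // x ∈ J} ⊕ PUnit.{1}) (Equiv.optionEquivSumPUnit _).symm
  exact h2

/-- The number of distinct traces of a chain on a principal factor. -/
noncomputable def traceCount (J : Set S) {n : ℕ} (c : Fin (n + 1) → Subsemigroup S) : ℕ :=
  (Set.range (fun i => traceSg J (c i))).ncard

lemma one_mem_lengthSet {M : Type*} [Mul M] {A B : Subsemigroup M} (h : A < B)
    (hA : (A : Set M).Nonempty) (hB : (B : Set M).Nonempty) : 1 ∈ lengthSet M := by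
  refine ⟨fun i => if i = 0 then A else B, ?_, ?_⟩
  · intro i j hij
    fin_cases i <;> fin_cases j <;> simp_all
  · intro i
    by_cases hi : i = 0 <;> simp [hi, hA, hB]

omit [Fintype S] in
lemma trace_sum (Js : Finset (Set S)) (hcover : ∀ x : S, jClass x ∈ Js) :
    ∀ (n : ℕ) (c : Fin (n + 1) → Subsemigroup S), StrictMono c →
      n + Js.card ≤ ∑ J ∈ Js, traceCount J c := by
  intro n
  induction n with
  | zero =>
    intro c _
    rw [Nat.zero_add, Finset.card_eq_sum_ones]
    refine Finset.sum_le_sum fun J _ => ?_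
    exact Set.Nonempty.ncard_pos (Set.toFinite _) (Set.range_nonempty _)
  | succ n ih =>
    intro c hc
    classical
    set c' : Fin (n + 1) → Subsemigroup S := fun i => c i.castSucc with hc'def
    have hc' : StrictMono c' := fun i j hij => hc (Fin.castSucc_lt_castSucc_iff.2 hij)
    have hlt : c ((Fin.last n).castSucc) < c (Fin.last (n + 1)) := hc (by simp [Fin.lt_def])
    obtain ⟨w, hw1, hw0⟩ := SetLike.exists_of_lt hlt
    set J0 := jClass w with hJ0def
    have hJ0 : J0 ∈ Js := hcover w
    have hwJ : w ∈ J0 := mem_jClass_self w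
    set v := traceSg J0 (c (Fin.last (n + 1))) with hvdef
    have hsub : ∀ J : Set S, Set.range (fun i => traceSg J (c' i)) ⊆
        Set.range (fun i => traceSg J (c i)) := by
      rintro J _ ⟨i, rfl⟩
      exact ⟨i.castSucc, rfl⟩
    have hvnot : v ∉ Set.range (fun i => traceSg J0 (c' i)) := by
      rintro ⟨i, hi⟩
      have h1 : traceSg J0 (c' i) ≤ traceSg J0 (c' (Fin.last n)) :=
        traceSg_mono _ (hc'.monotone (Fin.le_last i))
      have h2 : traceSg J0 (c' (Fin.last n)) ≤ v :=
        traceSg_mono _ (hc.monotone (Fin.le_last _))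
      have h3 : traceSg J0 (c' (Fin.last n)) = v := le_antisymm h2 (hi ▸ h1)
      have h4 : pfSome ⟨w, hwJ⟩ ∈ v := (some_mem_traceSg_iff _).2 hw1
      rw [← h3, some_mem_traceSg_iff] at h4
      exact hw0 h4
    have key : ∀ J ∈ Js, traceCount J c' ≤ traceCount J c :=
      fun J _ => Set.ncard_le_ncard (hsub J) (Set.toFinite _)
    have keyJ0 : traceCount J0 c' + 1 ≤ traceCount J0 c := by
      have h5 : insert v (Set.range (fun i => traceSg J0 (c' i))) ⊆
          Set.range (fun i => traceSg J0 (c i)) := by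
        rintro a (rfl | ha)
        · exact ⟨Fin.last (n + 1), rfl⟩
        · exact hsub J0 ha
      calc traceCount J0 c' + 1
          = (insert v (Set.range (fun i => traceSg J0 (c' i)))).ncard := by
            rw [Set.ncard_insert_of_notMem hvnot (Set.toFinite _)]; rfl
        _ ≤ traceCount J0 c := Set.ncard_le_ncard h5 (Set.toFinite _)
    have hihc := ih c' hc'
    have hsplit1 : ∑ J ∈ Js, traceCount J c' =
        traceCount J0 c' + ∑ J ∈ Js.erase J0, traceCount J c' :=
      (Finset.add_sum_erase Js _ hJ0).symm
    have hsplit2 : ∑ J ∈ Js, traceCount J c =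
        traceCount J0 c + ∑ J ∈ Js.erase J0, traceCount J c :=
      (Finset.add_sum_erase Js _ hJ0).symm
    have herase : ∑ J ∈ Js.erase J0, traceCount J c' ≤ ∑ J ∈ Js.erase J0, traceCount J c :=
      Finset.sum_le_sum fun J hJ => key J (Finset.mem_of_mem_erase hJ)
    omega

end Upper

section Upper2
variable {S : Type*} [Semigroup S] [Fintype S]

lemma finset_chain_card_le {M : Type*} [Mul M] [Finite M] (F : Finset (Subsemigroup M))
    (hch : IsChain (· ≤ ·) (F : Set (Subsemigroup M)))
    (hne : ∀ T ∈ F, (T : Set M).Nonempty) :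
    F.card ≤ semigroupLength M + 1 := by
  rcases F.eq_empty_or_nonempty with rfl | hFne
  · simp
  · obtain ⟨f, hf, hfmem⟩ := chain_enum F hch hFne
    have hpos : 0 < F.card := Finset.card_pos.2 hFne
    have hEq : F.card = (F.card - 1) + 1 := by omega
    have hmem : (F.card - 1) ∈ lengthSet M := by
      refine ⟨fun i => f (Fin.cast hEq.symm i), ?_, ?_⟩
      · intro i j hij; exact hf hij
      · intro i; exact hne _ (hfmem _)
    have := le_semigroupLength hmem
    omega

lemma traceCount_chain {J : Set S} {n : ℕ} {c : Fin (n + 1) → Subsemigroup S}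
    (hc : StrictMono c) :
    IsChain (· ≤ ·) (Set.range (fun i => traceSg J (c i))) := by
  rintro _ ⟨i, rfl⟩ _ ⟨j, rfl⟩ _
  rcases le_total i j with h | h
  · exact Or.inl (traceSg_mono _ (hc.monotone h))
  · exact Or.inr (traceSg_mono _ (hc.monotone h))

lemma traceCount_le (J : Set S) {n : ℕ} (c : Fin (n + 1) → Subsemigroup S)
    (hc : StrictMono c) :
    traceCount J c ≤ semigroupLength (PrincipalFactor J) + 1 := by
  classical
  set R := Set.range (fun i => traceSg J (c i)) with hR
  have hfin : R.Finite := Set.toFinite _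
  have h1 : traceCount J c = hfin.toFinset.card := Set.ncard_eq_toFinset_card R hfin
  rw [h1]
  refine finset_chain_card_le _ ?_ ?_
  · rw [Set.Finite.coe_toFinset]; exact traceCount_chain hc
  · intro T hT
    rw [Set.Finite.mem_toFinset] at hT
    obtain ⟨i, rfl⟩ := hT
    exact ⟨pfNone J, none_mem_traceSg _⟩

lemma traceCount_le_of_mem_bot {J : Set S} {n : ℕ} {c : Fin (n + 1) → Subsemigroup S}
    (hc : StrictMono c) {x0 : S} (hx0J : x0 ∈ J) (hx0 : x0 ∈ c 0) :
    traceCount J c ≤ semigroupLength (PrincipalFactor J) := by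
  classical
  set R := Set.range (fun i => traceSg J (c i)) with hR
  have hfin : R.Finite := Set.toFinite _
  have hsome : ∀ T ∈ R, pfSome ⟨x0, hx0J⟩ ∈ T := by
    rintro _ ⟨i, rfl⟩
    exact (some_mem_traceSg_iff _).2 (hc.monotone (Fin.zero_le i) hx0)
  have hznot : Zsg J ∉ R := by
    intro hz
    have := hsome _ hz
    rw [mem_Zsg_iff] at this
    exact pfSome_ne_none _ this
  have hzle : ∀ T ∈ R, Zsg J ≤ T := by
    intro T hT
    rcases hT with ⟨i, rfl⟩
    exact Zsg_le_iff.2 (none_mem_traceSg _)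
  have hch : IsChain (· ≤ ·) (insert (Zsg J) R) := by
    refine (traceCount_chain hc).insert ?_
    intro T hT _
    exact Or.inl (hzle T hT)
  have hfin' : (insert (Zsg J) R).Finite := Set.toFinite _
  have hcard : (insert (Zsg J) R).ncard = traceCount J c + 1 :=
    Set.ncard_insert_of_notMem hznot hfin
  have h1 : (insert (Zsg J) R).ncard = hfin'.toFinset.card :=
    Set.ncard_eq_toFinset_card _ hfin'
  have h2 : hfin'.toFinset.card ≤ semigroupLength (PrincipalFactor J) + 1 := by
    refine finset_chain_card_le _ ?_ ?_
    · rw [Set.Finite.coe_toFinset]; exact hch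
    · intro T hT
      rw [Set.Finite.mem_toFinset] at hT
      rcases hT with rfl | hT
      · exact ⟨pfNone J, rfl⟩
      · exact ⟨pfSome ⟨x0, hx0J⟩, hsome T hT⟩
  omega

lemma upper_bound (Js : Finset (Set S)) (hcover : ∀ x : S, jClass x ∈ Js)
    {n : ℕ} (hn : n ∈ lengthSet S) :
    n + 1 ≤ ∑ J ∈ Js, semigroupLength (PrincipalFactor J) := by
  classical
  obtain ⟨c, hc, hne⟩ := hn
  obtain ⟨x0, hx0⟩ := hne 0
  set J0 := jClass x0 with hJ0def
  have hJ0 : J0 ∈ Js := hcover x0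
  have hx0J : x0 ∈ J0 := mem_jClass_self x0
  have h1 := trace_sum Js hcover n c hc
  have h3 : traceCount J0 c ≤ semigroupLength (PrincipalFactor J0) :=
    traceCount_le_of_mem_bot hc hx0J hx0
  have hLpos : 1 ≤ semigroupLength (PrincipalFactor J0) := by
    have hlt : Zsg J0 < ⊤ := by
      refine lt_of_le_of_ne le_top ?_
      intro h
      have : pfSome ⟨x0, hx0J⟩ ∈ Zsg J0 := h ▸ trivial
      exact pfSome_ne_none _ (mem_Zsg_iff _ |>.1 this)
    exact le_semigroupLength
      (one_mem_lengthSet hlt ⟨pfNone J0, rfl⟩ ⟨pfNone J0, trivial⟩)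
  have hsplit1 : ∑ J ∈ Js, traceCount J c =
      traceCount J0 c + ∑ J ∈ Js.erase J0, traceCount J c :=
    (Finset.add_sum_erase Js _ hJ0).symm
  have hsplit2 : ∑ J ∈ Js, semigroupLength (PrincipalFactor J) =
      semigroupLength (PrincipalFactor J0) +
        ∑ J ∈ Js.erase J0, semigroupLength (PrincipalFactor J) :=
    (Finset.add_sum_erase Js _ hJ0).symm
  have herase : ∑ J ∈ Js.erase J0, traceCount J c ≤
      ∑ J ∈ Js.erase J0, (semigroupLength (PrincipalFactor J) + 1) :=
    Finset.sum_le_sum fun J _ => traceCount_le J c hc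
  have hsum1 : ∑ J ∈ Js.erase J0, (semigroupLength (PrincipalFactor J) + 1) =
      (∑ J ∈ Js.erase J0, semigroupLength (PrincipalFactor J)) + (Js.erase J0).card := by
    rw [Finset.sum_add_distrib]
    simp
  have hcarderase : (Js.erase J0).card = Js.card - 1 := Finset.card_erase_of_mem hJ0
  have hcardpos : 1 ≤ Js.card := Finset.card_pos.2 ⟨J0, hJ0⟩
  omega

end Upper2

section Extend
variable {M : Type*} [Mul M]

lemma snoc_chain {k : ℕ} (c : Fin (k + 1) → Subsemigroup M) (hc : StrictMono c)
    (hne : ∀ i, ((c i : Set M)).Nonempty) (T : Subsemigroup M) (hT : c (Fin.last k) < T) :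
    (k + 1) ∈ lengthSet M := by
  refine ⟨fun i => if h : (i : ℕ) ≤ k then c ⟨i, by omega⟩ else T, ?_, ?_⟩
  · intro i j hij
    have hij' : (i : ℕ) < (j : ℕ) := hij
    by_cases hi : (i : ℕ) ≤ k
    · by_cases hj : (j : ℕ) ≤ k
      · simp only [dif_pos hi, dif_pos hj]
        exact hc (by simp only [Fin.lt_def]; omega)
      · simp only [dif_pos hi, dif_neg hj]
        exact lt_of_le_of_lt (hc.monotone (by simp only [Fin.le_def, Fin.last]; omega)) hT
    · exact absurd hij' (by have := j.isLt; omega)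
  · intro i
    by_cases hi : (i : ℕ) ≤ k
    · simp only [dif_pos hi]; exact hne _
    · simp only [dif_neg hi]
      obtain ⟨w, hw⟩ := hne (Fin.last k)
      exact ⟨w, hT.le hw⟩

lemma cons_chain {k : ℕ} (c : Fin (k + 1) → Subsemigroup M) (hc : StrictMono c)
    (hne : ∀ i, ((c i : Set M)).Nonempty) (A : Subsemigroup M) (hA : A < c 0)
    (hAne : ((A : Set M)).Nonempty) : (k + 1) ∈ lengthSet M := by
  refine ⟨fun i => if h : (i : ℕ) = 0 then A else c ⟨(i : ℕ) - 1, by have := i.isLt; omega⟩,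
    ?_, ?_⟩
  · intro i j hij
    have hij' : (i : ℕ) < (j : ℕ) := hij
    have hj : ¬ (j : ℕ) = 0 := by omega
    by_cases hi : (i : ℕ) = 0
    · simp only [dif_pos hi, dif_neg hj]
      exact lt_of_lt_of_le hA (hc.monotone (by simp only [Fin.le_def, Fin.val_zero]; omega))
    · simp only [dif_neg hi, dif_neg hj]
      exact hc (by simp only [Fin.lt_def]; omega)
  · intro i
    by_cases hi : (i : ℕ) = 0
    · simp only [dif_pos hi]; exact hAne
    · simp only [dif_neg hi]; exact hne _

end Extend

section Norm
variable {S : Type*} [Semigroup S] [Fintype S]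

lemma exists_norm_chain (J : Set S) (hJ : J.Nonempty) :
    ∃ W : Fin (semigroupLength (PrincipalFactor J) + 1) → Subsemigroup (PrincipalFactor J),
      StrictMono W ∧ W 0 = Zsg J ∧ W (Fin.last _) = ⊤ := by
  classical
  obtain ⟨x0, hx0⟩ := hJ
  set L := semigroupLength (PrincipalFactor J) with hLdef
  have h0mem : (0 : ℕ) ∈ lengthSet (PrincipalFactor J) :=
    ⟨fun _ => Zsg J, fun i j hij => absurd (Fin.lt_def.1 hij)
      (by have h1 := i.isLt; have h2 := j.isLt; omega), fun _ => ⟨pfNone J, rfl⟩⟩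
  have hLmem : L ∈ lengthSet (PrincipalFactor J) := semigroupLength_mem ⟨0, h0mem⟩
  obtain ⟨c, hc, hne⟩ := hLmem
  have hnotsucc : (L + 1) ∉ lengthSet (PrincipalFactor J) :=
    not_lengthSet_succ _ (by omega)
  have htop : c (Fin.last L) = ⊤ := by
    by_contra hnetop
    exact hnotsucc (snoc_chain c hc hne ⊤ (lt_of_le_of_ne le_top hnetop))
  by_cases hz0 : pfNone J ∈ c 0
  · have hbot : c 0 = Zsg J := by
      by_contra hnebot
      exact hnotsucc (cons_chain c hc hne (Zsg J)
        (lt_of_le_of_ne (Zsg_le_iff.2 hz0) (Ne.symm hnebot)) ⟨pfNone J, rfl⟩)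
    exact ⟨c, hc, hbot, htop⟩
  · obtain ⟨w0, hw0⟩ := hne 0
    have hw0ne : w0 ≠ pfNone J := fun h => hz0 (h ▸ hw0)
    have hPne : ∃ i, pfNone J ∈ c i := by
      by_contra hall
      push_neg at hall
      have hd : StrictMono (fun i => Zins (c i)) := by
        intro i j hij
        refine lt_of_le_of_ne (Zins_mono (hc.monotone hij.le)) ?_
        intro heq
        dsimp only at heq
        have hle : c j ≤ c i := by
          intro w hw
          have hwz : w ∈ Zins (c j) := (mem_Zins_iff w).2 (Or.inr hw)
          rw [← heq, mem_Zins_iff] at hwz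
          rcases hwz with rfl | hw'
          · exact absurd hw (hall j)
          · exact hw'
        exact (hc hij).not_ge hle
      refine hnotsucc (cons_chain _ hd (fun i => ⟨pfNone J, Or.inl rfl⟩) (Zsg J) ?_
        ⟨pfNone J, rfl⟩)
      refine lt_of_le_of_ne (Zsg_le_Zins _) ?_
      intro heq
      have hw0' : w0 ∈ Zins (c 0) := (mem_Zins_iff w0).2 (Or.inr hw0)
      rw [← heq, mem_Zsg_iff] at hw0'
      exact hw0ne hw0'
    -- the minimal index p containing the zero
    set Pset : Finset (Fin (L + 1)) := Finset.univ.filter (fun i => pfNone J ∈ c i) with hPset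
    have hPsetne : Pset.Nonempty := by
      obtain ⟨i, hi⟩ := hPne
      exact ⟨i, by simp [hPset, hi]⟩
    set pF := Pset.min' hPsetne with hpF
    set p := (pF : ℕ) with hpdef
    have hpL : p ≤ L := by have := pF.isLt; omega
    have hpmemF : pfNone J ∈ c pF := by
      have := Pset.min'_mem hPsetne
      simp only [hPset, Finset.mem_filter] at this
      exact this.2
    have hzmem : ∀ k : ℕ, (hk : k ≤ L) → p ≤ k → pfNone J ∈ c ⟨k, by omega⟩ := by
      intro k hk hpk
      have : c pF ≤ c ⟨k, by omega⟩ := hc.monotone (by simp only [Fin.le_def]; omega)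
      exact this hpmemF
    have hznot : ∀ k : ℕ, (hk : k ≤ L) → k < p → pfNone J ∉ c ⟨k, by omega⟩ := by
      intro k hk hkp hmem
      have : pF ≤ ⟨k, by omega⟩ := Pset.min'_le _ (by simp [hPset, hmem])
      simp only [Fin.le_def] at this
      omega
    have hp0 : p ≠ 0 := by
      intro h
      have := hzmem 0 (by omega) (by omega)
      exact hz0 (by simpa using this)
    -- zone facts
    have zone2lt : ∀ a b : ℕ, (ha : a ≤ L) → (hb : b ≤ L) → a < b → b < p →
        Zins (c ⟨a, by omega⟩) < Zins (c ⟨b, by omega⟩) := by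
      intro a b ha hb hab hbp
      refine lt_of_le_of_ne (Zins_mono (hc.monotone (by simp only [Fin.le_def]; omega))) ?_
      intro heq
      have hle : c ⟨b, by omega⟩ ≤ c ⟨a, by omega⟩ := by
        intro w hw
        have hwz : w ∈ Zins (c ⟨b, by omega⟩) := (mem_Zins_iff w).2 (Or.inr hw)
        rw [← heq, mem_Zins_iff] at hwz
        rcases hwz with rfl | hw'
        · exact absurd hw (hznot b hb hbp)
        · exact hw'
      exact (hc (show (⟨a, by omega⟩ : Fin (L + 1)) < ⟨b, by omega⟩ by
        simp only [Fin.lt_def]; omega)).not_ge hle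
    have zineq : ∀ a : ℕ, (hap : a < p) → Zins (c ⟨a, by omega⟩) ≤ c ⟨p, by omega⟩ := by
      intro a hap
      refine Zins_le_of_none_mem (hc.monotone (by simp only [Fin.le_def]; omega)) ?_
      exact hzmem p hpL le_rfl
    have hw0mem : ∀ k : ℕ, (hk : k ≤ L) → w0 ∈ c ⟨k, by omega⟩ := by
      intro k hk
      have h0le : c 0 ≤ c ⟨k, by omega⟩ :=
        hc.monotone (by simp only [Fin.le_def, Fin.val_zero]; omega)
      exact h0le hw0
    -- gluing equality
    have hglue : c ⟨p, by omega⟩ = Zins (c ⟨p - 1, by omega⟩) := by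
      by_contra hneq
      refine hnotsucc ⟨fun i => if h0 : (i : ℕ) = 0 then Zsg J
        else if hp : (i : ℕ) ≤ p then Zins (c ⟨(i : ℕ) - 1, by omega⟩)
        else c ⟨(i : ℕ) - 1, by have := i.isLt; omega⟩, ?_, ?_⟩
      · intro i j hij
        have hij' : (i : ℕ) < (j : ℕ) := hij
        have hj0 : ¬ (j : ℕ) = 0 := by omega
        have hjL : (j : ℕ) ≤ L + 1 := by have := j.isLt; omega
        by_cases hi0 : (i : ℕ) = 0
        · simp only [dif_pos hi0, dif_neg hj0]
          by_cases hjp : (j : ℕ) ≤ p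
          · simp only [dif_pos hjp]
            refine lt_of_le_of_ne (Zsg_le_Zins _) ?_
            intro heq
            have : w0 ∈ Zins (c ⟨(j : ℕ) - 1, by omega⟩) :=
              (mem_Zins_iff w0).2 (Or.inr (hw0mem _ (by omega)))
            rw [← heq, mem_Zsg_iff] at this
            exact hw0ne this
          · simp only [dif_neg hjp]
            refine lt_of_le_of_ne (Zsg_le_iff.2 (hzmem _ (by omega) (by omega))) ?_
            intro heq
            have : w0 ∈ c ⟨(j : ℕ) - 1, by omega⟩ := hw0mem _ (by omega)
            rw [← heq, mem_Zsg_iff] at this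
            exact hw0ne this
        · simp only [dif_neg hi0, dif_neg hj0]
          by_cases hip : (i : ℕ) ≤ p
          · simp only [dif_pos hip]
            by_cases hjp : (j : ℕ) ≤ p
            · simp only [dif_pos hjp]
              exact zone2lt _ _ (by omega) (by omega) (by omega) (by omega)
            · simp only [dif_neg hjp]
              have hle1 : Zins (c ⟨(i : ℕ) - 1, by omega⟩) ≤ c ⟨p, by omega⟩ :=
                zineq _ (by omega)
              by_cases hcase : p < (j : ℕ) - 1
              · exact lt_of_le_of_lt hle1 (hc (by simp only [Fin.lt_def]; omega))
              · have hjeq : (j : ℕ) - 1 = p := by omega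
                by_cases hieq : (i : ℕ) = p
                · have e1 : Zins (c ⟨(i : ℕ) - 1, by omega⟩) =
                      Zins (c ⟨p - 1, by omega⟩) := by
                    congr 2
                    apply Fin.ext
                    show (i : ℕ) - 1 = p - 1
                    omega
                  have e2 : c ⟨(j : ℕ) - 1, by have := j.isLt; omega⟩ =
                      c ⟨p, by omega⟩ := by
                    congr 1
                    apply Fin.ext
                    show (j : ℕ) - 1 = p
                    omega
                  rw [e1, e2]
                  exact lt_of_le_of_ne (zineq _ (by omega)) (Ne.symm hneq)
                · have hlt1 : Zins (c ⟨(i : ℕ) - 1, by omega⟩) <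
                      Zins (c ⟨p - 1, by omega⟩) :=
                    zone2lt _ _ (by omega) (by omega) (by omega) (by omega)
                  have e2 : c ⟨(j : ℕ) - 1, by have := j.isLt; omega⟩ =
                      c ⟨p, by omega⟩ := by
                    congr 1
                    apply Fin.ext
                    show (j : ℕ) - 1 = p
                    omega
                  rw [e2]
                  exact lt_of_lt_of_le hlt1 (zineq _ (by omega))
          · have hjp : ¬ (j : ℕ) ≤ p := by omega
            simp only [dif_neg hip, dif_neg hjp]
            exact hc (by simp only [Fin.lt_def]; omega)
      · intro i
        by_cases hi0 : (i : ℕ) = 0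
        · simp only [dif_pos hi0]; exact ⟨pfNone J, rfl⟩
        · simp only [dif_neg hi0]
          by_cases hip : (i : ℕ) ≤ p
          · simp only [dif_pos hip]; exact ⟨pfNone J, Or.inl rfl⟩
          · simp only [dif_neg hip]; exact hne _
    -- the normalized chain
    refine ⟨fun i => if h0 : (i : ℕ) = 0 then Zsg J
      else if hp : (i : ℕ) ≤ p then Zins (c ⟨(i : ℕ) - 1, by have := i.isLt; omega⟩)
      else c i, ?_, ?_, ?_⟩
    · intro i j hij
      have hij' : (i : ℕ) < (j : ℕ) := hij
      have hj0 : ¬ (j : ℕ) = 0 := by omega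
      have hjL : (j : ℕ) ≤ L := by have := j.isLt; omega
      by_cases hi0 : (i : ℕ) = 0
      · simp only [dif_pos hi0, dif_neg hj0]
        by_cases hjp : (j : ℕ) ≤ p
        · simp only [dif_pos hjp]
          refine lt_of_le_of_ne (Zsg_le_Zins _) ?_
          intro heq
          have : w0 ∈ Zins (c ⟨(j : ℕ) - 1, by omega⟩) :=
            (mem_Zins_iff w0).2 (Or.inr (hw0mem _ (by omega)))
          rw [← heq, mem_Zsg_iff] at this
          exact hw0ne this
        · simp only [dif_neg hjp]
          have hjeq : c j = c ⟨(j : ℕ), by omega⟩ := rfl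
          rw [hjeq]
          refine lt_of_le_of_ne (Zsg_le_iff.2 (hzmem _ (by omega) (by omega))) ?_
          intro heq
          have : w0 ∈ c ⟨(j : ℕ), by omega⟩ := hw0mem _ (by omega)
          rw [← heq, mem_Zsg_iff] at this
          exact hw0ne this
      · simp only [dif_neg hi0]
        by_cases hip : (i : ℕ) ≤ p
        · simp only [dif_pos hip, dif_neg hj0]
          by_cases hjp : (j : ℕ) ≤ p
          · simp only [dif_pos hjp]
            exact zone2lt _ _ (by omega) (by omega) (by omega) (by omega)
          · simp only [dif_neg hjp]
            have hle1 : Zins (c ⟨(i : ℕ) - 1, by omega⟩) ≤ c ⟨p, by omega⟩ :=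
              zineq _ (by omega)
            have hjeq : c j = c ⟨(j : ℕ), by omega⟩ := rfl
            rw [hjeq]
            exact lt_of_le_of_lt hle1 (hc (by simp only [Fin.lt_def]; omega))
        · have hjp : ¬ (j : ℕ) ≤ p := by omega
          simp only [dif_neg hip, dif_neg hj0, dif_neg hjp]
          exact hc hij
    · simp
    · have hlast : ((Fin.last L : Fin (L + 1)) : ℕ) = L := rfl
      by_cases hLp : L ≤ p
      · have hLeq : p = L := by omega
        have h0 : ¬ (L : ℕ) = 0 := by omega
        simp only [hlast, dif_neg h0, dif_pos (show L ≤ p by omega)]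
        have e1 : Zins (c ⟨L - 1, by omega⟩) = c ⟨p, by omega⟩ := by
          rw [hglue]; congr 1; simp [hLeq]
        rw [e1, ← htop]
        congr 1
        apply Fin.ext; simp [Fin.last, hLeq]
      · have h0 : ¬ (L : ℕ) = 0 := by omega
        simp only [hlast, dif_neg h0, dif_neg (show ¬ L ≤ p by omega)]
        exact htop

end Norm

section Lower
variable {S : Type*} [Semigroup S] [Fintype S]

noncomputable local instance setDecEq : DecidableEq (Set S) := Classical.decEq _

/-- A downward-closed collection of `J`-classes. -/
def DC (K : Finset (Set S)) : Prop :=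
  ∀ x y : S, jClass x ∈ K → principalIdeal y ⊆ principalIdeal x → jClass y ∈ K

omit [Fintype S] in
lemma exists_max_class {Js K : Finset (Set S)} (hJs : ∀ J : Set S, J ∈ Js ↔ ∃ x, J = jClass x)
    (hsub : K ⊆ Js) (hKne : K.Nonempty) :
    ∃ x0 : S, jClass x0 ∈ K ∧ ∀ y : S, jClass y ∈ K →
      principalIdeal x0 ⊆ principalIdeal y → jClass y = jClass x0 := by
  set idl : Set S → Set S := fun J => {s | ∃ x ∈ J, s ∈ principalIdeal x} with hidldef
  have hidl : ∀ x : S, idl (jClass x) = principalIdeal x := by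
    intro x
    ext s
    constructor
    · rintro ⟨y, hy, hs⟩
      rw [mem_jClass_iff] at hy
      exact hy ▸ hs
    · intro hs
      exact ⟨x, mem_jClass_self x, hs⟩
  obtain ⟨M, hMmem, hmax⟩ := Finset.exists_maximal (hKne.image idl)
  obtain ⟨J1, hJ1K, hJ1M⟩ := Finset.mem_image.1 hMmem
  obtain ⟨x0, rfl⟩ := (hJs J1).1 (hsub hJ1K)
  refine ⟨x0, hJ1K, ?_⟩
  intro y hy hsub0
  have h1 : idl (jClass y) ∈ K.image idl := Finset.mem_image_of_mem idl hy
  have h2 : ¬ M ⊂ idl (jClass y) := fun hss => (not_subset_of_ssubset hss) (hmax h1 hss.subset)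
  rw [← hJ1M, hidl, hidl] at h2
  have h3 : principalIdeal x0 = principalIdeal y := by
    by_contra hne
    exact h2 (ssubset_of_subset_of_ne hsub0 hne)
  exact jClass_eq_of_pi_eq h3.symm

omit [Fintype S] in
lemma DC_erase {K : Finset (Set S)} (hK : DC K) {x0 : S} (hx0 : jClass x0 ∈ K)
    (hmax : ∀ y : S, jClass y ∈ K → principalIdeal x0 ⊆ principalIdeal y →
      jClass y = jClass x0) :
    DC (K.erase (jClass x0)) := by
  intro a b ha hba
  have haK : jClass a ∈ K := Finset.mem_of_mem_erase ha
  have hbK : jClass b ∈ K := hK a b haK hba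
  refine Finset.mem_erase.2 ⟨?_, hbK⟩
  intro heq
  have hPI : principalIdeal b = principalIdeal x0 := by
    have := mem_jClass_self b
    rw [heq, mem_jClass_iff] at this
    exact this
  have h2 : principalIdeal x0 ⊆ principalIdeal a := hPI ▸ hba
  exact (Finset.mem_erase.1 ha).1 (hmax a haK h2)

/-- Lifting a subsemigroup of the principal factor of a maximal class over the
union of the lower classes. -/
def liftSg (K' : Finset (Set S)) (x0 : S) (hK' : DC K')
    (hdrop2 : ∀ a b : S, a ∈ jClass x0 → b ∈ jClass x0 → a * b ∉ jClass x0 →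
      jClass (a * b) ∈ K')
    (V : Subsemigroup (PrincipalFactor (jClass x0))) : Subsemigroup S where
  carrier := {s | jClass s ∈ K'} ∪ {s | ∃ h : s ∈ jClass x0, pfSome ⟨s, h⟩ ∈ V}
  mul_mem' := by
    rintro a b (ha | ⟨haJ, haV⟩) hb
    · exact Or.inl (hK' a (a * b) ha (pi_mul_right a b))
    · rcases hb with hb | ⟨hbJ, hbV⟩
      · exact Or.inl (hK' b (a * b) hb (pi_mul_left a b))
      · by_cases hab : a * b ∈ jClass x0
        · refine Or.inr ⟨hab, ?_⟩
          have hmul := V.mul_mem haV hbV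
          rw [pf_some_mul_some_of_mem hab] at hmul
          exact hmul
        · exact Or.inl (hdrop2 a b haJ hbJ hab)

lemma liftSg_mem_iff {K' : Finset (Set S)} {x0 : S} {hK' : DC K'} {hdrop2 : _}
    {V : Subsemigroup (PrincipalFactor (jClass x0))} (s : S) :
    s ∈ liftSg K' x0 hK' hdrop2 V ↔
      jClass s ∈ K' ∨ ∃ h : s ∈ jClass x0, pfSome ⟨s, h⟩ ∈ V := Iff.rfl

lemma liftSg_strictMono {K' : Finset (Set S)} {x0 : S} {hK' : DC K'} {hdrop2 : _}
    (hx0notK' : jClass x0 ∉ K')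
    {V V' : Subsemigroup (PrincipalFactor (jClass x0))}
    (hzV : pfNone (jClass x0) ∈ V) (hVV' : V < V') :
    liftSg K' x0 hK' hdrop2 V < liftSg K' x0 hK' hdrop2 V' := by
  have hle : liftSg K' x0 hK' hdrop2 V ≤ liftSg K' x0 hK' hdrop2 V' := by
    rintro s (hs | ⟨h, hv⟩)
    · exact Or.inl hs
    · exact Or.inr ⟨h, hVV'.le hv⟩
  refine lt_of_le_of_ne hle ?_
  intro heq
  obtain ⟨a, haV', haV⟩ := SetLike.exists_of_lt hVV'
  rcases pf_cases a with rfl | ⟨x, rfl⟩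
  · exact haV hzV
  · have hmem : x.1 ∈ liftSg K' x0 hK' hdrop2 V' := Or.inr ⟨x.2, haV'⟩
    rw [← heq] at hmem
    rcases hmem with hs | ⟨h, hv⟩
    · rw [Set.mem_setOf_eq, jClass_eq_of_mem x.2] at hs
      exact hx0notK' hs
    · exact haV hv

lemma liftSg_Zsg {K' : Finset (Set S)} {x0 : S} {hK' : DC K'} {hdrop2 : _} :
    ((liftSg K' x0 hK' hdrop2 (Zsg (jClass x0)) : Subsemigroup S) : Set S) =
      {s | jClass s ∈ K'} := by
  ext s
  constructor
  · rintro (hs | ⟨h, hv⟩)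
    · exact hs
    · exact absurd ((mem_Zsg_iff _).1 hv) (pfSome_ne_none _)
  · intro hs
    exact Or.inl hs

lemma liftSg_top {K : Finset (Set S)} {x0 : S} (hx0K : jClass x0 ∈ K)
    {hK' : DC (K.erase (jClass x0))} {hdrop2 : _} :
    ((liftSg (K.erase (jClass x0)) x0 hK' hdrop2 ⊤ : Subsemigroup S) : Set S) =
      {s | jClass s ∈ K} := by
  ext s
  constructor
  · rintro (hs | ⟨h, _⟩)
    · exact Finset.mem_of_mem_erase hs
    · rw [Set.mem_setOf_eq, jClass_eq_of_mem h]
      exact hx0K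
  · intro hs
    by_cases hclass : jClass s = jClass x0
    · refine Or.inr ⟨?_, trivial⟩
      rw [← hclass]
      exact mem_jClass_self s
    · exact Or.inl (Finset.mem_erase.2 ⟨hclass, hs⟩)

end Lower

section Main
variable {S : Type*} [Semigroup S] [Fintype S]

noncomputable local instance setDecEq' : DecidableEq (Set S) := Classical.decEq _

lemma lower_chain (Js : Finset (Set S)) (hJs : ∀ J : Set S, J ∈ Js ↔ ∃ x, J = jClass x) :
    ∀ K : Finset (Set S), K ⊆ Js → DC K →
      ∃ c : Fin ((∑ J ∈ K, semigroupLength (PrincipalFactor J)) + 1) → Subsemigroup S,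
        StrictMono c ∧ c 0 = ⊥ ∧ ((c (Fin.last _) : Subsemigroup S) : Set S) =
          {s | jClass s ∈ K} := by
  intro K
  induction K using Finset.strongInduction with
  | _ K ih =>
    intro hKJs hK
    rcases K.eq_empty_or_nonempty with rfl | hKne
    · rw [Finset.sum_empty]
      refine ⟨fun _ => ⊥, fun i j hij => absurd (Fin.lt_def.1 hij)
        (by have h1 := i.isLt; have h2 := j.isLt; omega), rfl, ?_⟩
      ext s
      simp
    · obtain ⟨x0, hx0K, hmax⟩ := exists_max_class hJs hKJs hKne
      set K' := K.erase (jClass x0) with hK'def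
      have hssub : K' ⊂ K := Finset.erase_ssubset hx0K
      have hK'sub : K' ⊆ Js := subset_trans (Finset.erase_subset _ _) hKJs
      have hK' : DC K' := DC_erase hK hx0K hmax
      have hx0notK' : jClass x0 ∉ K' := Finset.notMem_erase _ _
      have hdrop2 : ∀ a b : S, a ∈ jClass x0 → b ∈ jClass x0 → a * b ∉ jClass x0 →
          jClass (a * b) ∈ K' := by
        intro a b haJ hbJ hab
        have h1 : jClass (a * b) ∈ K :=
          hK a (a * b) (by rw [jClass_eq_of_mem haJ]; exact hx0K) (pi_mul_right a b)
        refine Finset.mem_erase.2 ⟨?_, h1⟩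
        intro heq
        exact hab (heq ▸ mem_jClass_self (a * b))
      obtain ⟨c', hc', hc'0, hc'top⟩ := ih K' hssub hK'sub hK'
      obtain ⟨W, hW, hW0, hWtop⟩ :=
        exists_norm_chain (jClass x0) ⟨x0, mem_jClass_self x0⟩
      set d : Fin (semigroupLength (PrincipalFactor (jClass x0)) + 1) → Subsemigroup S :=
        fun i => liftSg K' x0 hK' hdrop2 (W i) with hddef
      have hd : StrictMono d := by
        intro i j hij
        refine liftSg_strictMono hx0notK' ?_ (hW hij)
        have hle : Zsg (jClass x0) ≤ W i := hW0 ▸ hW.monotone (Fin.zero_le i)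
        exact hle rfl
      have hjoint : c' (Fin.last _) = d 0 := by
        apply SetLike.coe_injective
        rw [hc'top]
        show _ = ((liftSg K' x0 hK' hdrop2 (W 0) : Subsemigroup S) : Set S)
        rw [hW0, liftSg_Zsg]
      obtain ⟨e, he, he0, helast⟩ := chain_glue c' d hc' hd hjoint
      have hsum : (∑ J ∈ K, semigroupLength (PrincipalFactor J)) =
          (∑ J ∈ K', semigroupLength (PrincipalFactor J)) +
            semigroupLength (PrincipalFactor (jClass x0)) := by
        have h2 := Finset.add_sum_erase K (fun J => semigroupLength (PrincipalFactor J)) hx0K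
        rw [← hK'def] at h2
        omega
      rw [hsum]
      refine ⟨e, he, by rw [he0, hc'0], ?_⟩
      rw [helast]
      show ((liftSg K' x0 hK' hdrop2 (W (Fin.last _)) : Subsemigroup S) : Set S) = _
      rw [hWtop, liftSg_top hx0K]

theorem semigroupLength_regular' (S : Type*) [Semigroup S] [Fintype S]
    (Js : Finset (Set S)) (hJs : ∀ J : Set S, J ∈ Js ↔ ∃ x : S, J = jClass x) :
    semigroupLength S = (∑ J ∈ Js, semigroupLength (PrincipalFactor J)) - 1 := by
  rcases isEmpty_or_nonempty S with hS | hS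
  · have hJsempty : Js = ∅ := by
      refine Finset.eq_empty_of_forall_notMem ?_
      intro J hJ
      obtain ⟨x, -⟩ := (hJs J).1 hJ
      exact hS.elim x
    have hlsempty : lengthSet S = ∅ := by
      ext k
      simp only [Set.mem_empty_iff_false, iff_false]
      rintro ⟨c, -, hne⟩
      obtain ⟨x, -⟩ := hne 0
      exact hS.elim x
    rw [hJsempty, Finset.sum_empty, semigroupLength_def, hlsempty, csSup_empty]
    rfl
  · obtain ⟨x⟩ := hS
    have hcover : ∀ y : S, jClass y ∈ Js := fun y => (hJs _).2 ⟨y, rfl⟩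
    set SL := ∑ J ∈ Js, semigroupLength (PrincipalFactor J) with hSL
    -- SL ≥ 1
    have hL0pos : 1 ≤ semigroupLength (PrincipalFactor (jClass x)) := by
      have hx : x ∈ jClass x := mem_jClass_self x
      have hlt : Zsg (jClass x) < ⊤ := by
        refine lt_of_le_of_ne le_top ?_
        intro h
        have : pfSome ⟨x, hx⟩ ∈ Zsg (jClass x) := h ▸ trivial
        exact pfSome_ne_none _ ((mem_Zsg_iff _).1 this)
      exact le_semigroupLength
        (one_mem_lengthSet hlt ⟨pfNone _, rfl⟩ ⟨pfNone _, trivial⟩)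
    have hSpos : 1 ≤ SL := by
      have := Finset.single_le_sum
        (f := fun J => semigroupLength (PrincipalFactor J))
        (fun i _ => Nat.zero_le _) (hcover x)
      omega
    -- lower bound
    have hDCJs : DC Js := fun _ y _ _ => hcover y
    obtain ⟨c, hc, hc0, hctop⟩ := lower_chain Js hJs Js subset_rfl hDCJs
    have hlow : (SL - 1) ∈ lengthSet S := by
      have hEq : SL - 1 + 1 = SL := by omega
      refine ⟨fun j => c ⟨(j : ℕ) + 1, by have := j.isLt; omega⟩, ?_, ?_⟩
      · intro i j hij
        exact hc (by simp only [Fin.lt_def]; exact Nat.add_lt_add_right hij 1)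
      · intro j
        have hlt : c 0 < c ⟨(j : ℕ) + 1, by have := j.isLt; omega⟩ :=
          hc (by simp only [Fin.lt_def, Fin.val_zero]; omega)
        obtain ⟨w, hw, -⟩ := SetLike.exists_of_lt hlt
        exact ⟨w, hw⟩
    have hlower : SL - 1 ≤ semigroupLength S := le_semigroupLength hlow
    -- upper bound
    have h0mem : (0 : ℕ) ∈ lengthSet S :=
      ⟨fun _ => ⊤, fun i j hij => absurd (Fin.lt_def.1 hij)
        (by have h1 := i.isLt; have h2 := j.isLt; omega), fun _ => ⟨x, trivial⟩⟩
    have hmem : semigroupLength S ∈ lengthSet S := semigroupLength_mem ⟨0, h0mem⟩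
    have hupper := upper_bound Js hcover hmem
    omega

end Main

/-- Let `S` be a finite regular semigroup with `J`-classes `J₁, …, J_m`.  Then
`l(S) = l(J₁*) + ⋯ + l(J_m*) − 1`, where `J*` is the principal factor of `J`. -/
theorem semigroupLength_regular (S : Type*) [Semigroup S] [Fintype S]
    (hreg : ∀ x : S, ∃ y : S, x * y * x = x)
    (Js : Finset (Set S)) (hJs : ∀ J : Set S, J ∈ Js ↔ ∃ x : S, J = jClass x) :
    semigroupLength S = (∑ J ∈ Js, semigroupLength (PrincipalFactor J)) - 1 :=
  semigroupLength_regular' S Js hJs
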